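/- Every commutative ring that is finitely generated as a ℤ-algebra and is infinite (as a set) has infinitely many maximal ideals. -/

import Mathlib

/-- `ℤ` is a Jacobson ring. -/
theorem int_isJacobsonRing : IsJacobsonRing ℤ := by
  rw [isJacobsonRing_iff_prime_eq]
  intro P hP
  rcases eq_or_ne P ⊥ with rfl | hne
  · refine le_antisymm (fun x hx => ?_) Ideal.le_jacobson
    rw [Ideal.mem_jacobson_bot] at hx
    have h1 := hx 1
    have h2 := hx (-1)
    rw [Int.isUnit_iff] at h1 h2
    have : x = 0 := by omega
    simp [this]
  · exact Ideal.jacobson_eq_self_of_isMaximal (H := IsPrime.to_maximal_ideal hne)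

/-- A field which is a finitely generated `ℤ`-algebra is finite. -/
theorem field_finite_of_finiteType_int (K : Type*) [Field K] [Algebra.FiniteType ℤ K] :
    Finite K := by
  haveI : IsJacobsonRing ℤ := int_isJacobsonRing
  haveI : Module.Finite ℤ K := finite_of_finite_type_of_isJacobsonRing ℤ K
  rcases CharP.char_is_prime_or_zero K (ringChar K) with hp | h0
  · haveI : Fact (ringChar K).Prime := ⟨hp⟩
    letI : Algebra (ZMod (ringChar K)) K := ZMod.algebra K (ringChar K)
    haveI : Module.Finite (ZMod (ringChar K)) K :=
      Module.Finite.of_restrictScalars_finite ℤ (ZMod (ringChar K)) K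
    exact Module.finite_of_finite (ZMod (ringChar K))
  · haveI : CharZero K := by
      have hc := ringChar.charP K
      rw [h0] at hc
      exact CharP.charP_to_charZero K
    haveI : Algebra.IsIntegral ℤ K := Algebra.IsIntegral.of_finite ℤ K
    have h : IsIntegral ℤ ((algebraMap ℚ K) (1/2)) := Algebra.IsIntegral.isIntegral _
    rw [isIntegral_algebraMap_iff ((algebraMap ℚ K).injective)] at h
    obtain ⟨x, hx⟩ := IsIntegrallyClosed.isIntegral_iff.mp h
    exfalso
    have : (x : ℚ) = 1/2 := by exact_mod_cast hx
    have h2 : (2 * x : ℤ) = 1 := by exact_mod_cast (by linarith : 2 * (x : ℚ) = 1)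
    omega

/-- A Noetherian ring with a nilpotent ideal with finite quotient is finite. -/
theorem finite_of_nilpotent_ideal_finite_quot (n : ℕ) :
    ∀ (R : Type u) [CommRing R] [IsNoetherianRing R] (J : Ideal R),
      J ^ n = ⊥ → Finite (R ⧸ J) → Finite R := by
  induction n with
  | zero =>
    intro R _ _ J h _
    rw [pow_zero, Ideal.one_eq_top] at h
    have h1 : (1 : R) = 0 := by
      have : (1 : R) ∈ (⊥ : Ideal R) := h ▸ Submodule.mem_top
      simpa using this
    haveI : Subsingleton R := subsingleton_of_zero_eq_one h1.symm
    exact Finite.of_subsingleton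
  | succ n ih =>
    intro R _ _ J hJ hfin
    set N : Ideal R := J ^ n with hN
    have fin2 : Finite (R ⧸ (N ⊔ J)) :=
      Finite.of_surjective (Ideal.Quotient.factor (S := J) (T := N ⊔ J) le_sup_right)
        (fun y => by
          obtain ⟨x, rfl⟩ := Ideal.Quotient.mk_surjective y
          exact ⟨Ideal.Quotient.mk J x, rfl⟩)
    have fin3 : Finite ((R ⧸ N) ⧸ J.map (Ideal.Quotient.mk N)) :=
      Finite.of_equiv _ (DoubleQuot.quotQuotEquivQuotSup N J).symm.toEquiv
    have hpow : (J.map (Ideal.Quotient.mk N)) ^ n = ⊥ := by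
      rw [← Ideal.map_pow, ← hN, Ideal.map_quotient_self]
    have finQ : Finite (R ⧸ N) := ih (R ⧸ N) _ hpow fin3
    have hann : Module.IsTorsionBySet R N (J : Set R) := by
      rintro ⟨x, hx⟩ ⟨j, hj⟩
      have : j * x ∈ (⊥ : Ideal R) := by
        rw [← hJ, pow_succ, mul_comm j x]
        exact Ideal.mul_mem_mul hx hj
      ext
      simpa using this
    letI : Module (R ⧸ J) N := hann.module
    haveI : IsScalarTower R (R ⧸ J) N := hann.isScalarTower
    haveI : Module.Finite R N := Module.Finite.iff_fg.mpr (IsNoetherian.noetherian N)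
    haveI : Module.Finite (R ⧸ J) N := Module.Finite.of_restrictScalars_finite R (R ⧸ J) N
    haveI : Finite N := Module.finite_of_finite (R ⧸ J)
    exact Finite.of_ideal_quotient N

/-- Every commutative ring which is a finitely generated `ℤ`-algebra and is infinite as a set
has infinitely many maximal ideals. -/
theorem stmt_7 (R : Type*) [CommRing R] (hR : Algebra.FiniteType ℤ R) [Infinite R] :
    {m : Ideal R | m.IsMaximal}.Infinite := by
  by_contra hfin
  rw [Set.not_infinite] at hfin
  haveI := hR
  haveI : IsJacobsonRing ℤ := int_isJacobsonRing
  haveI : IsJacobsonRing R := isJacobsonRing_of_finiteType (A := ℤ)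
  haveI : IsNoetherianRing R := Algebra.FiniteType.isNoetherianRing ℤ R
  haveI : Finite {m : Ideal R | m.IsMaximal} := hfin.to_subtype
  set J : Ideal R := sInf {m : Ideal R | m.IsMaximal} with hJdef
  have hJ : (⊥ : Ideal R).jacobson = J := by
    rw [Ideal.jacobson, hJdef]
    congr 1
    ext m
    simp
  have hrad : (⊥ : Ideal R).radical = J := by rw [Ideal.radical_eq_jacobson, hJ]
  have hnil : nilradical R = J := by rw [nilradical, Ideal.zero_eq_bot, hrad]
  obtain ⟨n, hn⟩ := IsNoetherianRing.isNilpotent_nilradical R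
  have hpow : J ^ n = ⊥ := by
    rw [← hnil, hn, Ideal.zero_eq_bot]
  haveI fields : ∀ m : {m : Ideal R | m.IsMaximal}, Finite (R ⧸ (m : Ideal R)) := by
    rintro ⟨m, hm⟩
    haveI : m.IsMaximal := hm
    letI : Field (R ⧸ m) := Ideal.Quotient.field m
    haveI : Algebra.FiniteType ℤ (R ⧸ m) :=
      hR.of_surjective (Ideal.Quotient.mkₐ ℤ m) (Ideal.Quotient.mkₐ_surjective ℤ m)
    exact @field_finite_of_finiteType_int (R ⧸ m) _ this
  have hJi : J = ⨅ m : {m : Ideal R | m.IsMaximal}, (m : Ideal R) := by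
    rw [hJdef, sInf_eq_iInf']
  have finQ : Finite (R ⧸ J) := by
    have inj := Ideal.quotientInfToPiQuotient_inj
      (fun m : {m : Ideal R | m.IsMaximal} => (m : Ideal R))
    have : Finite (R ⧸ ⨅ m : {m : Ideal R | m.IsMaximal}, (m : Ideal R)) :=
      Finite.of_injective _ inj
    rwa [← hJi] at this
  have : Finite R := finite_of_nilpotent_ideal_finite_quot n R J hpow finQ
  exact not_finite R
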